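/- For nonnegative matrices V, V' ∈ ℝ^{n×k} with V' entrywise positive, a diagonal matrix D with positive entries, and a symmetric entrywise-nonnegative k × k matrix Ω⁺, one has tr(Ω⁺ Vᵀ D V) ≤ ∑_{ij} (D V' Ω⁺)_{ij} V_{ij}² / V'_{ij}. -/
import Mathlib


open Matrix

lemma aux13 (d w p q x y : ℝ) (hp : 0 < p) (hq : 0 < q)
    (hd : 0 ≤ d) (hw : 0 ≤ w) :
    d * w * x * y ≤ (d * q * w * x ^ 2 / p + d * p * w * y ^ 2 / q) / 2 := by
  rw [div_add_div _ _ hp.ne' hq.ne', div_div, le_div_iff₀ (by positivity)]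
  nlinarith [mul_nonneg (mul_nonneg hd hw) (sq_nonneg (q * x - p * y)), hp.le, hq.le]

theorem stmt_13 (n k : ℕ)
    (V V' : Matrix (Fin n) (Fin k) ℝ)
    (hV : ∀ i j, 0 ≤ V i j) (hV' : ∀ i j, 0 < V' i j)
    (D : Matrix (Fin n) (Fin n) ℝ) (dD : Fin n → ℝ)
    (hD : D = Matrix.diagonal dD) (hdD : ∀ i, 0 < dD i)
    (Ωp : Matrix (Fin k) (Fin k) ℝ)
    (hΩsymm : Ωp.IsSymm) (hΩnonneg : ∀ i j, 0 ≤ Ωp i j) :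
    (Ωp * Vᵀ * D * V).trace ≤
      ∑ i, ∑ j, (D * V' * Ωp) i j * (V i j)^2 / V' i j := by
  subst hD
  have hΩ : ∀ a b, Ωp b a = Ωp a b := fun a b => hΩsymm.apply a b
  have lhs_eq : (Ωp * Vᵀ * (Matrix.diagonal dD) * V).trace
      = ∑ i, ∑ a, ∑ b, dD i * Ωp a b * V i a * V i b := by
    simp only [Matrix.trace, Matrix.diag, Matrix.mul_apply, Matrix.transpose_apply,
      Matrix.diagonal_apply, Finset.sum_mul, Finset.mul_sum, mul_ite, mul_zero, ite_mul, zero_mul,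
      Finset.sum_ite_eq', Finset.mem_univ, if_true]
    rw [Finset.sum_comm]
    refine Finset.sum_congr rfl fun i _ => ?_
    refine Finset.sum_congr rfl fun a _ => Finset.sum_congr rfl fun b _ => by ring
  have rhs_eq : ∑ i, ∑ a, (Matrix.diagonal dD * V' * Ωp) i a * (V i a)^2 / V' i a
      = ∑ i, ∑ a, ∑ b, dD i * V' i b * Ωp b a * (V i a) ^ 2 / V' i a := by
    refine Finset.sum_congr rfl fun i _ => Finset.sum_congr rfl fun a _ => ?_
    simp only [Matrix.mul_apply, Matrix.diagonal_apply, ite_mul, zero_mul,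
      Finset.sum_ite_eq, Finset.mem_univ, if_true, Finset.sum_mul, Finset.sum_div]
  rw [lhs_eq, rhs_eq]
  have key : ∀ i : Fin n, ∑ a, ∑ b, dD i * Ωp a b * V i a * V i b ≤
      ∑ a, ∑ b, (dD i * V' i b * Ωp a b * (V i a) ^ 2 / V' i a
        + dD i * V' i a * Ωp a b * (V i b) ^ 2 / V' i b) / 2 := by
    intro i
    refine Finset.sum_le_sum fun a _ => Finset.sum_le_sum fun b _ => ?_
    have := aux13 (dD i) (Ωp a b) (V' i a) (V' i b) (V i a) (V i b)
      (hV' i a) (hV' i b) (hdD i).le (hΩnonneg a b)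
    calc dD i * Ωp a b * V i a * V i b ≤
        (dD i * V' i b * Ωp a b * V i a ^ 2 / V' i a
          + dD i * V' i a * Ωp a b * V i b ^ 2 / V' i b) / 2 := by
          convert this using 3 <;> ring
      _ = _ := rfl
  refine le_trans (Finset.sum_le_sum fun i _ => key i) (le_of_eq ?_)
  refine Finset.sum_congr rfl fun i _ => ?_
  have swap : ∑ a, ∑ b, dD i * V' i a * Ωp a b * (V i b) ^ 2 / V' i b
      = ∑ a, ∑ b, dD i * V' i b * Ωp a b * (V i a) ^ 2 / V' i a := by
    rw [Finset.sum_comm]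
    exact Finset.sum_congr rfl fun a _ => Finset.sum_congr rfl fun b _ => by rw [hΩ a b]
  have h1 : ∀ a b : Fin k, Ωp b a = Ωp a b := hΩ
  calc ∑ a, ∑ b, (dD i * V' i b * Ωp a b * (V i a) ^ 2 / V' i a
        + dD i * V' i a * Ωp a b * (V i b) ^ 2 / V' i b) / 2
      = (∑ a, ∑ b, dD i * V' i b * Ωp a b * (V i a) ^ 2 / V' i a
        + ∑ a, ∑ b, dD i * V' i a * Ωp a b * (V i b) ^ 2 / V' i b) / 2 := by
        simp only [add_div, Finset.sum_add_distrib, Finset.sum_div]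
    _ = ∑ a, ∑ b, dD i * V' i b * Ωp a b * (V i a) ^ 2 / V' i a := by
        rw [swap]; ring
    _ = ∑ a, ∑ b, dD i * V' i b * Ωp b a * (V i a) ^ 2 / V' i a := by
        exact Finset.sum_congr rfl fun a _ => Finset.sum_congr rfl fun b _ => by rw [h1 a b]
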